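/- Fix n ≥ 2, k ∈ ℝ, m ∈ ℤ. On the open set of jet points x = (x_0, x_1, …, x_{n−1}) ∈ ℝ^n with x_0 ≠ 0, define recursively p_0(x) = x_0 and p_{j+1}(x) = Σ_{i=0}^{n−2} x_{i+1}·∂p_j/∂x_i (x) + k·x_0^m·p_j(x) for 0 ≤ j ≤ n−2 (the formal total-derivative recursion defining the chain polynomials). For 2 ≤ i ≤ n define I_i(t,x) = Σ_{r=1}^{i} (−1)^{r+1} · t^{i−r}/(i−r)! · p_{n−r}(x)/p_{n−1}(x). Then at every point (t,x) with x_0 ≠ 0 and p_{n−1}(x) ≠ 0, the determinant of the (n−1)×(n−1) matrix (∂I_i/∂x_j)_{2≤i≤n, 1≤j≤n−1} equals x_0/(p_{n−1}(x))^n, which is nonzero; consequently the Jacobian matrix of (I_2, …, I_n) with respect to the variables (t, x_0, x_1, …, x_{n−1}) has rank n−1 at every such point, i.e., the n−1 first integrals I_{(n;2)}, …, I_{(n;n)} are functionally independent. -/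

import Mathlib

open ContDiff Topology

/-- The chain terms in jet coordinates `x = (x_0, …, x_{n-1})`:
`p_0(x) = x_0` and `p_{j+1}(x) = Σ_{i=0}^{n-2} x_{i+1}·∂p_j/∂x_i(x) + k·x_0^m·p_j(x)`. -/
noncomputable def jetP (n : ℕ) [NeZero n] (k : ℝ) (m : ℤ) : ℕ → (Fin n → ℝ) → ℝ
  | 0 => fun x => x 0
  | j + 1 => fun x =>
      (∑ i : Fin n, if h : (i : ℕ) + 1 < n then
        x ⟨(i : ℕ) + 1, h⟩ * fderiv ℝ (jetP n k m j) x (Pi.single i 1) else 0)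
      + k * x 0 ^ m * jetP n k m j x


lemma contDiffAt_zpow_aux (m : ℤ) (y : ℝ) (hy : y ≠ 0) :
    ContDiffAt ℝ ∞ (fun z : ℝ => z ^ m) y := by
  induction m using Int.rec with
  | ofNat p =>
      simpa [zpow_natCast] using (contDiff_id.pow p (𝕜 := ℝ) (f := fun z : ℝ => z)).contDiffAt
  | negSucc p =>
      have h1 : ContDiffAt ℝ ∞ (fun z : ℝ => z ^ (p + 1)) y :=
        (contDiff_id.pow (p + 1) (𝕜 := ℝ) (f := fun z : ℝ => z)).contDiffAt
      have h2 : ContDiffAt ℝ ∞ (fun z : ℝ => (z ^ (p + 1))⁻¹) y := h1.inv (pow_ne_zero _ hy)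
      simpa [zpow_negSucc] using h2

lemma jetP_contDiffAt (n : ℕ) [NeZero n] (k : ℝ) (m : ℤ) (j : ℕ) :
    ∀ x : Fin n → ℝ, x 0 ≠ 0 → ContDiffAt ℝ ∞ (jetP n k m j) x := by
  induction j with
  | zero =>
      intro x hx
      exact (ContinuousLinearMap.contDiff (ContinuousLinearMap.proj (R := ℝ)
        (φ := fun _ : Fin n => ℝ) 0)).contDiffAt
  | succ j ih =>
      intro x hx
      show ContDiffAt ℝ ∞ (fun x => (∑ i : Fin n, if h : (i : ℕ) + 1 < n then
        x ⟨(i : ℕ) + 1, h⟩ * fderiv ℝ (jetP n k m j) x (Pi.single i 1) else 0)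
        + k * x 0 ^ m * jetP n k m j x) x
      have hfd : ContDiffAt ℝ ∞ (fderiv ℝ (jetP n k m j)) x :=
        (ih x hx).fderiv_right (le_of_eq rfl)
      apply ContDiffAt.add
      · apply ContDiffAt.sum
        intro i _
        by_cases h : (i : ℕ) + 1 < n
        · simp only [dif_pos h]
          exact ((ContinuousLinearMap.contDiff (ContinuousLinearMap.proj (R := ℝ)
            (φ := fun _ : Fin n => ℝ) ⟨(i : ℕ) + 1, h⟩)).contDiffAt).mul
            (hfd.clm_apply contDiffAt_const)
        · simp only [dif_neg h]
          exact contDiffAt_const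
      · apply ContDiffAt.mul
        · apply ContDiffAt.mul contDiffAt_const
          exact (contDiffAt_zpow_aux m (x 0) hx).comp x
            (ContinuousLinearMap.contDiff (ContinuousLinearMap.proj (R := ℝ)
              (φ := fun _ : Fin n => ℝ) 0)).contDiffAt
        · exact ih x hx



lemma jetP_fderiv_vals (n : ℕ) [NeZero n] (k : ℝ) (m : ℤ) :
    ∀ s : ℕ, s < n → ∀ x : Fin n → ℝ, x 0 ≠ 0 → ∀ j : Fin n,
      ((s < (j : ℕ) → fderiv ℝ (jetP n k m s) x (Pi.single j 1) = 0) ∧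
       ((j : ℕ) = s → fderiv ℝ (jetP n k m s) x (Pi.single j 1) = 1)) := by
  intro s
  induction s with
  | zero =>
      intro _ x hx j
      have h0 : jetP n k m 0 = fun y : Fin n → ℝ => y 0 := rfl
      have hproj : fderiv ℝ (jetP n k m 0) x =
          (ContinuousLinearMap.proj (R := ℝ) (φ := fun _ : Fin n => ℝ) 0) := by
        rw [h0]
        exact (ContinuousLinearMap.proj (R := ℝ) (φ := fun _ : Fin n => ℝ) 0).fderiv
      rw [hproj]
      constructor
      · intro hj
        have : j ≠ 0 := by
          intro h; rw [h] at hj; simp at hj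
        simp [Pi.single_apply, this.symm]
      · intro hj
        have : j = 0 := Fin.ext (by simpa using hj)
        simp [this, Pi.single_apply]
  | succ s ih =>
      intro hsn x hx j
      have hsn' : s < n := Nat.lt_of_succ_lt hsn
      set ps := jetP n k m s with hps_def
      -- eventual membership in U
      have hU : ∀ᶠ y in 𝓝 x, y 0 ≠ 0 :=
        (continuous_apply (0 : Fin n)).continuousAt.eventually_ne hx
      have hpsx : ContDiffAt ℝ ∞ ps x := jetP_contDiffAt n k m s x hx
      set g := fderiv ℝ ps with hg_def
      have hg : ContDiffAt ℝ ∞ g x := hpsx.fderiv_right (le_of_eq rfl)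
      have hgd : DifferentiableAt ℝ g x := hg.differentiableAt (by simp)
      have hgi : ∀ i : Fin n, DifferentiableAt ℝ (fun y => g y (Pi.single i 1)) x := by
        intro i
        exact (hg.clm_apply contDiffAt_const).differentiableAt (by simp)
      -- symmetry of second derivative
      have hsymm : ∀ v w, fderiv ℝ g x v w = fderiv ℝ g x w v := by
        intro v w
        exact hpsx.isSymmSndFDerivAt (by rw [minSmoothness_of_isRCLikeNormedField]; exact WithTop.coe_le_coe.mpr le_top) v w
      -- second derivative application formula
      have happ : ∀ (w : Fin n → ℝ) (v : Fin n → ℝ),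
          fderiv ℝ (fun y => g y w) x v = fderiv ℝ g x v w := by
        intro w v
        have := fderiv_clm_apply (c := g) (u := fun _ => w) hgd (differentiableAt_const _)
        rw [this]
        simp
      -- vanishing of mixed second derivatives in high directions
      have hvanish : ∀ j' : Fin n, s < (j' : ℕ) →
          ∀ i : Fin n, fderiv ℝ (fun y => g y (Pi.single j' 1)) x (Pi.single i 1) = 0 := by
        intro j' hj' i
        have hev : (fun y => g y (Pi.single j' 1)) =ᶠ[𝓝 x] (fun _ => (0 : ℝ)) := by
          filter_upwards [hU] with y hy
          exact (ih hsn' y hy j').1 hj'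
        rw [hev.fderiv_eq, fderiv_fun_const]
        simp
      have hmix : ∀ i : Fin n, s < (j : ℕ) →
          fderiv ℝ (fun y => g y (Pi.single i 1)) x (Pi.single j 1) = 0 := by
        intro i hj
        rw [happ, hsymm, ← happ, hvanish j hj i]
      -- build the derivative of jetP (s+1)
      have hzpow : HasFDerivAt (fun y : Fin n → ℝ => k * y 0 ^ m)
          (k • ((m : ℝ) * x 0 ^ (m - 1)) •
            (ContinuousLinearMap.proj (R := ℝ) (φ := fun _ : Fin n => ℝ) 0)) x := by
        have h1 : HasDerivAt (fun z : ℝ => z ^ m) ((m : ℝ) * x 0 ^ (m - 1)) (x 0) :=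
          hasDerivAt_zpow m (x 0) (Or.inl hx)
        have h2 : HasFDerivAt (fun y : Fin n → ℝ => y 0)
            (ContinuousLinearMap.proj (R := ℝ) (φ := fun _ : Fin n => ℝ) 0) x :=
          (ContinuousLinearMap.proj (R := ℝ) (φ := fun _ : Fin n => ℝ) 0).hasFDerivAt
        have h3 := (h1.comp_hasFDerivAt x h2).const_mul k
        exact h3
      have hD : HasFDerivAt (jetP n k m (s+1))
          ((∑ i : Fin n, if h : (i : ℕ) + 1 < n then
              (x ⟨(i : ℕ) + 1, h⟩ • fderiv ℝ (fun y => g y (Pi.single i 1)) x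
                + (g x (Pi.single i 1)) •
                  (ContinuousLinearMap.proj (R := ℝ) (φ := fun _ : Fin n => ℝ) ⟨(i : ℕ) + 1, h⟩))
            else 0)
           + ((k * x 0 ^ m) • g x
              + (ps x) • (k • ((m : ℝ) * x 0 ^ (m - 1)) •
                 (ContinuousLinearMap.proj (R := ℝ) (φ := fun _ : Fin n => ℝ) 0)))) x := by
        have hsum : HasFDerivAt
            (fun y : Fin n → ℝ => ∑ i : Fin n, if h : (i : ℕ) + 1 < n then
              y ⟨(i : ℕ) + 1, h⟩ * g y (Pi.single i 1) else 0)
            (∑ i : Fin n, if h : (i : ℕ) + 1 < n then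
              (x ⟨(i : ℕ) + 1, h⟩ • fderiv ℝ (fun y => g y (Pi.single i 1)) x
                + (g x (Pi.single i 1)) •
                  (ContinuousLinearMap.proj (R := ℝ) (φ := fun _ : Fin n => ℝ) ⟨(i : ℕ) + 1, h⟩))
            else 0) x := by
          apply HasFDerivAt.fun_sum
          intro i _
          by_cases h : (i : ℕ) + 1 < n
          · simp only [dif_pos h]
            have hc : HasFDerivAt (fun y : Fin n → ℝ => y ⟨(i : ℕ) + 1, h⟩)
                (ContinuousLinearMap.proj (R := ℝ) (φ := fun _ : Fin n => ℝ) ⟨(i : ℕ) + 1, h⟩) x :=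
              (ContinuousLinearMap.proj (R := ℝ) (φ := fun _ : Fin n => ℝ) _).hasFDerivAt
            have hd : HasFDerivAt (fun y => g y (Pi.single i 1))
                (fderiv ℝ (fun y => g y (Pi.single i 1)) x) x := (hgi i).hasFDerivAt
            exact hc.mul hd
          · simp only [dif_neg h]
            exact hasFDerivAt_const 0 x
        have hprod : HasFDerivAt (fun y : Fin n → ℝ => k * y 0 ^ m * ps y)
            ((k * x 0 ^ m) • g x
              + (ps x) • (k • ((m : ℝ) * x 0 ^ (m - 1)) •
                 (ContinuousLinearMap.proj (R := ℝ) (φ := fun _ : Fin n => ℝ) 0))) x := by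
          have := hzpow.mul (hpsx.differentiableAt (by simp)).hasFDerivAt
          exact this
        exact hsum.add hprod
      have hfd : fderiv ℝ (jetP n k m (s+1)) x = _ := hD.fderiv
      rw [hfd]
      constructor
      · -- j > s+1
        intro hj
        have hj' : s < (j : ℕ) := by omega
        simp only [ContinuousLinearMap.add_apply, ContinuousLinearMap.sum_apply,
          ContinuousLinearMap.smul_apply, ContinuousLinearMap.proj_apply, smul_eq_mul]
        have hz1 : ∀ i : Fin n, (if h : (i : ℕ) + 1 < n then
            (x ⟨(i : ℕ) + 1, h⟩ • fderiv ℝ (fun y => g y (Pi.single i 1)) x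
              + (g x (Pi.single i 1)) •
                (ContinuousLinearMap.proj (R := ℝ) (φ := fun _ : Fin n => ℝ) ⟨(i : ℕ) + 1, h⟩))
          else 0) (Pi.single j 1) = 0 := by
          intro i
          by_cases h : (i : ℕ) + 1 < n
          · simp only [dif_pos h, ContinuousLinearMap.add_apply, ContinuousLinearMap.smul_apply,
              ContinuousLinearMap.proj_apply, smul_eq_mul]
            rw [hmix i hj', Pi.single_apply]
            by_cases hij : (⟨(i : ℕ) + 1, h⟩ : Fin n) = j
            · rw [if_pos hij]
              have hi : s < (i : ℕ) := by
                have hv := congrArg Fin.val hij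
                simp only [Fin.val_mk] at hv
                omega
              rw [(ih hsn' x hx i).1 hi]
              ring
            · rw [if_neg hij]
              ring
          · simp [dif_neg h]
        rw [Finset.sum_congr rfl (fun i _ => hz1 i), Finset.sum_const_zero]
        have hgj : g x (Pi.single j 1) = 0 := (ih hsn' x hx j).1 hj'
        have hj0 : Pi.single (M := fun _ : Fin n => ℝ) j 1 0 = 0 := by
          rw [Pi.single_apply, if_neg]
          intro hcontra
          have h0 : (0:ℕ) = (j : ℕ) := by simpa using congrArg Fin.val hcontra
          omega
        rw [hgj, hj0]
        ring
      · -- j = s+1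
        intro hj
        simp only [ContinuousLinearMap.add_apply, ContinuousLinearMap.sum_apply,
          ContinuousLinearMap.smul_apply, ContinuousLinearMap.proj_apply, smul_eq_mul]
        have hj' : s < (j : ℕ) := by omega
        have hz1 : ∀ i : Fin n, (if h : (i : ℕ) + 1 < n then
            (x ⟨(i : ℕ) + 1, h⟩ • fderiv ℝ (fun y => g y (Pi.single i 1)) x
              + (g x (Pi.single i 1)) •
                (ContinuousLinearMap.proj (R := ℝ) (φ := fun _ : Fin n => ℝ) ⟨(i : ℕ) + 1, h⟩))
          else 0) (Pi.single j 1) = if (i : ℕ) = s then 1 else 0 := by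
          intro i
          by_cases h : (i : ℕ) + 1 < n
          · simp only [dif_pos h, ContinuousLinearMap.add_apply, ContinuousLinearMap.smul_apply,
              ContinuousLinearMap.proj_apply, smul_eq_mul]
            rw [hmix i hj']
            by_cases his : (i : ℕ) = s
            · have heq : (⟨(i : ℕ) + 1, h⟩ : Fin n) = j := by
                apply Fin.ext; simp [his, hj]
              rw [Pi.single_apply, if_pos heq, if_pos his]
              have : g x (Pi.single i 1) = 1 := (ih hsn' x hx i).2 his
              rw [this]; ring
            · have hne : (⟨(i : ℕ) + 1, h⟩ : Fin n) ≠ j := by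
                intro hcontra
                rw [Fin.ext_iff] at hcontra
                simp only [Fin.val_mk] at hcontra
                omega
              rw [Pi.single_apply, if_neg hne, if_neg his]
              ring
          · simp only [dif_neg h]
            have his : ¬ ((i : ℕ) = s) := by
              intro hcontra
              have := j.isLt
              omega
            simp [if_neg his]
        rw [Finset.sum_congr rfl (fun i _ => hz1 i)]
        have hsum1 : (∑ i : Fin n, if (i : ℕ) = s then (1:ℝ) else 0) = 1 := by
          rw [Finset.sum_eq_single (⟨s, hsn'⟩ : Fin n)]
          · simp
          · intro b _ hb
            rw [if_neg]
            intro hcontra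
            exact hb (Fin.ext hcontra)
          · intro habs
            exact absurd (Finset.mem_univ _) habs
        rw [hsum1]
        have hgj : g x (Pi.single j 1) = 0 := (ih hsn' x hx j).1 hj'
        have hj0 : Pi.single (M := fun _ : Fin n => ℝ) j 1 0 = 0 := by
          rw [Pi.single_apply, if_neg]
          intro hcontra
          have h0 : (0:ℕ) = (j : ℕ) := by simpa using congrArg Fin.val hcontra
          omega
        rw [hgj, hj0]
        ring

lemma det_anti : ∀ (q : ℕ) (B : Matrix (Fin q) (Fin q) ℝ),
    (∀ i j : Fin q, q ≤ (i : ℕ) + (j : ℕ) → B i j = 0) →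
    B.det = (-1 : ℝ) ^ (∑ i ∈ Finset.range q, i) *
      ∏ i : Fin q, B i ⟨q - 1 - (i : ℕ), by have := i.isLt; omega⟩ := by
  intro q
  induction q with
  | zero => intro B _; simp [Matrix.det_fin_zero]
  | succ q ih =>
      intro B hB
      rw [Matrix.det_succ_column B (Fin.last q)]
      rw [Finset.sum_eq_single (0 : Fin (q + 1))]
      · have hminor : (B.submatrix (Fin.succAbove 0) (Fin.last q).succAbove).det =
            (-1 : ℝ) ^ (∑ i ∈ Finset.range q, i) *
            ∏ i : Fin q, B i.succ ⟨q - 1 - (i : ℕ), by have := i.isLt; omega⟩ := by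
          rw [ih _ (by
            intro i j hij
            simp only [Matrix.submatrix_apply]
            apply hB
            simp only [Fin.zero_succAbove, Fin.succAbove_last, Fin.val_succ, Fin.coe_castSucc]
            omega)]
          congr 1
          apply Finset.prod_congr rfl
          intro i _
          simp only [Matrix.submatrix_apply, Fin.zero_succAbove, Fin.succAbove_last]
          congr 1
        rw [hminor, Fin.prod_univ_succ]
        have h0 : (⟨q + 1 - 1 - ((0 : Fin (q+1)) : ℕ), by omega⟩ : Fin (q+1)) = Fin.last q := by
          apply Fin.ext; simp
        rw [h0]
        have hrest : ∀ i : Fin q,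
            B i.succ ⟨q + 1 - 1 - ((i.succ : Fin (q+1)) : ℕ), by have := i.isLt; omega⟩ =
            B i.succ ⟨q - 1 - (i : ℕ), by have := i.isLt; omega⟩ := by
          intro i
          congr 1
          apply Fin.ext
          simp only [Fin.val_succ]
          omega
        rw [Finset.prod_congr rfl (fun i _ => hrest i), Finset.sum_range_succ, pow_add]
        simp only [Fin.val_zero, Fin.val_last]
        ring
      · intro b _ hb
        have hbv : 1 ≤ (b : ℕ) := by
          rcases Nat.eq_zero_or_pos (b : ℕ) with h | h
          · exact absurd (Fin.ext h : b = 0) hb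
          · exact h
        rw [hB b (Fin.last q) (by simp only [Fin.val_last]; omega)]
        ring
      · intro h
        exact absurd (Finset.mem_univ _) h

open Finset in
lemma det_aux (N : ℕ) (P x0 t : ℝ) (hP : P ≠ 0) (hx0 : x0 ≠ 0)
    (ps : ℕ → ℝ) (A : ℕ → ℕ → ℝ)
    (hA0 : ∀ s j, s ≤ N + 1 → j ≤ N + 1 → s < j → A s j = 0)
    (hA1 : ∀ s, s ≤ N + 1 → A s s = 1)
    (hps0 : ps 0 = x0) (hpsP : ps (N + 1) = P)
    (M : Matrix (Fin (N + 1)) (Fin (N + 1)) ℝ)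
    (hM : ∀ a b : Fin (N + 1), M a b = ∑ r ∈ Finset.Icc 1 ((a : ℕ) + 2),
      (-1 : ℝ) ^ (r + 1) * t ^ ((a : ℕ) + 2 - r) / ((a : ℕ) + 2 - r).factorial *
        ((P * A (N + 2 - r) ((b : ℕ) + 1) - ps (N + 2 - r) * A (N + 1) ((b : ℕ) + 1)) / P ^ 2)) :
    M.det = x0 / P ^ (N + 2) := by
  classical
  set L : Matrix (Fin (N + 1)) (Fin (N + 1)) ℝ := fun a ρ =>
    if (ρ : ℕ) ≤ (a : ℕ) then
      (-1 : ℝ) ^ ((ρ : ℕ) + 3) * t ^ ((a : ℕ) - (ρ : ℕ)) / ((a : ℕ) - (ρ : ℕ)).factorial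
    else 0 with hL
  set Nm : Matrix (Fin (N + 1)) (Fin (N + 1)) ℝ := fun ρ b =>
    (P * A (N - (ρ : ℕ)) ((b : ℕ) + 1) - ps (N - (ρ : ℕ)) * A (N + 1) ((b : ℕ) + 1)) / P ^ 2
    with hNm
  -- Step 1 : M = L * Nm
  have hfact : M = L * Nm := by
    ext a b
    rw [hM, Matrix.mul_apply]
    have h1mem : 1 ∈ Finset.Icc 1 ((a : ℕ) + 2) := by
      simp only [Finset.mem_Icc]; omega
    rw [← Finset.add_sum_erase _ _ h1mem]
    have hterm1 : (-1 : ℝ) ^ (1 + 1) * t ^ ((a : ℕ) + 2 - 1) / ((a : ℕ) + 2 - 1).factorial *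
        ((P * A (N + 2 - 1) ((b : ℕ) + 1) - ps (N + 2 - 1) * A (N + 1) ((b : ℕ) + 1)) / P ^ 2)
        = 0 := by
      have h21 : N + 2 - 1 = N + 1 := by omega
      rw [h21, hpsP]
      ring
    rw [hterm1, zero_add]
    have herase : (Finset.Icc 1 ((a : ℕ) + 2)).erase 1 = Finset.Ioc 1 ((a : ℕ) + 2) :=
      Finset.Icc_erase_left _ _
    rw [herase]
    -- RHS
    have hrhs : (∑ ρ : Fin (N + 1), L a ρ * Nm ρ b) =
        ∑ ρ ∈ Finset.range ((a : ℕ) + 1),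
          ((-1 : ℝ) ^ (ρ + 3) * t ^ ((a : ℕ) - ρ) / ((a : ℕ) - ρ).factorial) *
            ((P * A (N - ρ) ((b : ℕ) + 1) - ps (N - ρ) * A (N + 1) ((b : ℕ) + 1)) / P ^ 2) := by
      rw [Fin.sum_univ_eq_sum_range (fun ρ =>
        (if ρ ≤ (a : ℕ) then
          (-1 : ℝ) ^ (ρ + 3) * t ^ ((a : ℕ) - ρ) / ((a : ℕ) - ρ).factorial else 0) *
          ((P * A (N - ρ) ((b : ℕ) + 1) - ps (N - ρ) * A (N + 1) ((b : ℕ) + 1)) / P ^ 2))]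
      rw [← Finset.sum_filter_add_sum_filter_not (Finset.range (N + 1)) (fun ρ => ρ ≤ (a : ℕ))]
      have hfil : (Finset.range (N + 1)).filter (fun ρ => ρ ≤ (a : ℕ)) =
          Finset.range ((a : ℕ) + 1) := by
        ext ρ
        simp only [Finset.mem_filter, Finset.mem_range]
        have := a.isLt
        omega
      have hzero : ∑ ρ ∈ (Finset.range (N + 1)).filter (fun ρ => ¬ ρ ≤ (a : ℕ)),
          (if ρ ≤ (a : ℕ) then
            (-1 : ℝ) ^ (ρ + 3) * t ^ ((a : ℕ) - ρ) / ((a : ℕ) - ρ).factorial else 0) *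
            ((P * A (N - ρ) ((b : ℕ) + 1) - ps (N - ρ) * A (N + 1) ((b : ℕ) + 1)) / P ^ 2) = 0 := by
        apply Finset.sum_eq_zero
        intro ρ hρ
        simp only [Finset.mem_filter] at hρ
        rw [if_neg hρ.2]
        ring
      rw [hfil, hzero, add_zero]
      apply Finset.sum_congr rfl
      intro ρ hρ
      simp only [Finset.mem_range] at hρ
      rw [if_pos (by omega)]
    rw [hrhs]
    -- reindex
    apply Finset.sum_nbij' (i := fun r => r - 2) (j := fun ρ => ρ + 2)
    · intro r hr
      simp only [Finset.mem_Ioc] at hr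
      simp only [Finset.mem_range]
      omega
    · intro ρ hρ
      simp only [Finset.mem_range] at hρ
      simp only [Finset.mem_Ioc]
      omega
    · intro r hr
      simp only [Finset.mem_Ioc] at hr
      omega
    · intro ρ hρ
      omega
    · intro r hr
      simp only [Finset.mem_Ioc] at hr
      have e1 : (a : ℕ) + 2 - r = (a : ℕ) - (r - 2) := by omega
      have e2 : N + 2 - r = N - (r - 2) := by omega
      have e3 : r - 2 + 3 = r + 1 := by omega
      rw [e1, e2, e3]
  rw [hfact, Matrix.det_mul]
  -- Step 2 : det L
  have hdetL : L.det = (-1 : ℝ) ^ (∑ i ∈ Finset.range (N + 1), (i + 3)) := by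
    have htri : L.BlockTriangular OrderDual.toDual := by
      intro i j hij
      have : (i : ℕ) < (j : ℕ) := hij
      simp only [hL]
      rw [if_neg (by omega)]
    rw [Matrix.det_of_lowerTriangular L htri]
    have hdiag : ∀ i : Fin (N + 1), L i i = (-1 : ℝ) ^ ((i : ℕ) + 3) := by
      intro i
      simp only [hL]
      rw [if_pos le_rfl]
      simp
    rw [Finset.prod_congr rfl (fun i _ => hdiag i)]
    rw [Fin.prod_univ_eq_prod_range (fun i => (-1 : ℝ) ^ (i + 3))]
    rw [Finset.prod_pow_eq_pow_sum]
  -- Step 3 : Nm = (P^2)⁻¹ • K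
  set K : Matrix (Fin (N + 1)) (Fin (N + 1)) ℝ := fun ρ b =>
    P * A (N - (ρ : ℕ)) ((b : ℕ) + 1) - ps (N - (ρ : ℕ)) * A (N + 1) ((b : ℕ) + 1) with hK
  have hsmul : Nm = (P ^ 2)⁻¹ • K := by
    ext ρ b
    rw [Matrix.smul_apply, smul_eq_mul]; simp only [hNm, hK]
    ring
  have hdetNm : Nm.det = ((P ^ 2)⁻¹) ^ (N + 1) * K.det := by
    rw [hsmul, Matrix.det_smul]
    simp [Fintype.card_fin]
  -- Step 4 : row reduction
  set K' : Matrix (Fin (N + 1)) (Fin (N + 1)) ℝ := fun ρ b =>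
    if ρ = Fin.last N then -(x0 * A (N + 1) ((b : ℕ) + 1))
    else P * A (N - (ρ : ℕ)) ((b : ℕ) + 1) with hK'
  have hdetK : K.det = K'.det := by
    apply Matrix.det_eq_of_forall_row_eq_smul_add_const
      (c := fun ρ => if ρ = Fin.last N then 0 else ps (N - (ρ : ℕ)) / x0) (k := Fin.last N)
    · rw [if_pos rfl]
    · intro ρ b
      by_cases hρ : ρ = Fin.last N
      · subst hρ
        simp only [hK, hK', if_pos rfl]
        have hNN : N - ((Fin.last N : Fin (N + 1)) : ℕ) = 0 := by simp
        rw [hNN, hps0, hA0 0 ((b : ℕ) + 1) (by omega) (by have := b.isLt; omega) (by omega)]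
        simp
      · simp only [hK, hK', if_neg hρ, if_pos rfl]
        field_simp
        ring
  -- Step 5 : expand along last column
  have hcol : ∀ ρ : Fin (N + 1), ρ ≠ Fin.last N → K' ρ (Fin.last N) = 0 := by
    intro ρ hρ
    simp only [hK', if_neg hρ, Fin.val_last]
    rw [hA0 (N - (ρ : ℕ)) (N + 1) (by omega) (by omega) (by have := Fin.val_lt_last hρ; omega)]
    ring
  have hdetK' : K'.det = x0 * ((-1 : ℝ) ^ (∑ i ∈ Finset.range N, i) * P ^ N) * (-1) := by
    rw [Matrix.det_succ_column K' (Fin.last N)]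
    rw [Finset.sum_eq_single (Fin.last N)]
    · have hQ : (K'.submatrix (Fin.last N).succAbove (Fin.last N).succAbove).det =
          (-1 : ℝ) ^ (∑ i ∈ Finset.range N, i) * P ^ N := by
        rw [det_anti N _ (by
          intro i j hij
          simp only [Matrix.submatrix_apply, Fin.succAbove_last]; simp only [hK']
          rw [if_neg (by
            intro hcontra
            have := congrArg Fin.val hcontra
            simp only [Fin.coe_castSucc, Fin.val_last] at this
            have := i.isLt
            omega)]
          simp only [Fin.coe_castSucc]
          rw [hA0 (N - (i : ℕ)) ((j : ℕ) + 1) (by omega) (by have := j.isLt; omega) (by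
            have := i.isLt; have := j.isLt; omega)]
          ring)]
        congr 1
        have hone : ∀ i : Fin N,
            (K'.submatrix (Fin.last N).succAbove (Fin.last N).succAbove) i
              ⟨N - 1 - (i : ℕ), by have := i.isLt; omega⟩ = P := by
          intro i
          simp only [Matrix.submatrix_apply, Fin.succAbove_last]; simp only [hK']
          rw [if_neg (by
            intro hcontra
            have := congrArg Fin.val hcontra
            simp only [Fin.coe_castSucc, Fin.val_last] at this
            have := i.isLt
            omega)]
          simp only [Fin.coe_castSucc, Fin.val_mk]
          have hidx : N - 1 - (i : ℕ) + 1 = N - (i : ℕ) := by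
            have := i.isLt
            omega
          rw [hidx, hA1 (N - (i : ℕ)) (by omega)]
          ring
        rw [Finset.prod_congr rfl (fun i _ => hone i)]
        simp
      rw [hQ]
      simp only [hK', if_pos rfl, Fin.val_last]
      rw [hA1 (N + 1) le_rfl]
      have heven : (-1 : ℝ) ^ ((N : ℕ) + (N : ℕ)) = 1 := by
        rw [Even.neg_one_pow ⟨N, rfl⟩]
      rw [heven]
      ring
    · intro b _ hb
      rw [hcol b hb]
      ring
    · intro h
      exact absurd (Finset.mem_univ _) h
  -- Step 6 : combine
  rw [hdetL, hdetNm, hdetK, hdetK']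
  have hE1 : (∑ i ∈ Finset.range (N + 1), (i + 3)) =
      (∑ i ∈ Finset.range N, i) + N + 3 * (N + 1) := by
    rw [Finset.sum_add_distrib, Finset.sum_const, Finset.card_range, Finset.sum_range_succ]
    simp [mul_comm]
  have hsign : (-1 : ℝ) ^ (∑ i ∈ Finset.range (N + 1), (i + 3)) *
      ((-1 : ℝ) ^ (∑ i ∈ Finset.range N, i)) = -1 := by
    rw [← pow_add]
    apply Odd.neg_one_pow
    refine ⟨(∑ i ∈ Finset.range N, i) + 2 * N + 1, by rw [hE1]; ring⟩
  have hpows : ((P ^ 2)⁻¹) ^ (N + 1) * P ^ N = (P ^ (N + 2))⁻¹ := by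
    have hsplit : P ^ (2 * (N + 1)) = P ^ N * P ^ (N + 2) := by
      rw [← pow_add]; congr 1; omega
    calc ((P ^ 2)⁻¹) ^ (N + 1) * P ^ N = (P ^ N * P ^ (N + 2))⁻¹ * P ^ N := by
          rw [inv_pow, ← pow_mul, hsplit]
      _ = (P ^ (N + 2))⁻¹ := by
          rw [mul_inv, mul_comm ((P ^ N)⁻¹) _, mul_assoc,
            inv_mul_cancel₀ (pow_ne_zero N hP), mul_one]
  calc (-1 : ℝ) ^ (∑ i ∈ Finset.range (N + 1), (i + 3)) *
        (((P ^ 2)⁻¹) ^ (N + 1) * (x0 * ((-1 : ℝ) ^ (∑ i ∈ Finset.range N, i) * P ^ N) * (-1)))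
      = ((-1 : ℝ) ^ (∑ i ∈ Finset.range (N + 1), (i + 3)) *
          ((-1 : ℝ) ^ (∑ i ∈ Finset.range N, i))) * (-1) *
          (x0 * (((P ^ 2)⁻¹) ^ (N + 1) * P ^ N)) := by ring
    _ = x0 / P ^ (N + 2) := by
        rw [hsign, hpows, div_eq_mul_inv]
        ring





theorem functional_independence_of_first_integrals
    (n : ℕ) [NeZero n] (hn : 2 ≤ n) (k : ℝ) (m : ℤ)
    (Ifun : ℕ → ℝ → (Fin n → ℝ) → ℝ)
    (hIfun : ∀ i t x, Ifun i t x =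
      ∑ r ∈ Finset.Icc 1 i,
        (-1 : ℝ) ^ (r + 1) * t ^ (i - r) / (i - r).factorial *
          (jetP n k m (n - r) x / jetP n k m (n - 1) x))
    (t : ℝ) (x : Fin n → ℝ) (hx0 : x 0 ≠ 0) (hp : jetP n k m (n - 1) x ≠ 0)
    (M : Matrix (Fin (n - 1)) (Fin (n - 1)) ℝ)
    (hM : ∀ a b : Fin (n - 1), M a b =
      fderiv ℝ (fun y => Ifun ((a : ℕ) + 2) t y) x
        (Pi.single ⟨(b : ℕ) + 1, by have := b.isLt; omega⟩ 1))
    (Mfull : Matrix (Fin (n - 1)) (Fin (n + 1)) ℝ)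
    (hMfull : ∀ (a : Fin (n - 1)) (c : Fin (n + 1)), Mfull a c =
      if hc : (c : ℕ) = 0 then deriv (fun s => Ifun ((a : ℕ) + 2) s x) t
      else fderiv ℝ (fun y => Ifun ((a : ℕ) + 2) t y) x
        (Pi.single ⟨(c : ℕ) - 1, by have := c.isLt; omega⟩ 1)) :
    M.det = x 0 / (jetP n k m (n - 1) x) ^ n ∧
    x 0 / (jetP n k m (n - 1) x) ^ n ≠ 0 ∧
    Mfull.rank = n - 1 := by
  obtain ⟨N, rfl⟩ : ∃ N, n = N + 2 := ⟨n - 2, by omega⟩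
  have hone : (1 : WithTop ℕ∞) ≤ ∞ := by exact_mod_cast (le_top : (1:ℕ∞) ≤ ⊤)
  set PP : ℝ := jetP (N + 2) k m (N + 2 - 1) x with hPP
  have hp' : PP ≠ 0 := hp
  -- differentiability of all chain functions
  have hdiff : ∀ s : ℕ, DifferentiableAt ℝ (jetP (N + 2) k m s) x := fun s =>
    (jetP_contDiffAt (N + 2) k m s x hx0).differentiableAt (by simp)
  -- the partial derivative table
  set Af : ℕ → ℕ → ℝ := fun s j =>
    if h : j < N + 2 then fderiv ℝ (jetP (N + 2) k m s) x (Pi.single (⟨j, h⟩ : Fin (N + 2)) 1)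
    else 0 with hAf
  have hA0 : ∀ s j, s ≤ N + 1 → j ≤ N + 1 → s < j → Af s j = 0 := by
    intro s j hs hj hsj
    simp only [hAf]
    rw [dif_pos (by omega : j < N + 2)]
    exact (jetP_fderiv_vals (N + 2) k m s (by omega) x hx0 ⟨j, by omega⟩).1 (by simpa using hsj)
  have hA1 : ∀ s, s ≤ N + 1 → Af s s = 1 := by
    intro s hs
    simp only [hAf]
    rw [dif_pos (by omega : s < N + 2)]
    exact (jetP_fderiv_vals (N + 2) k m s (by omega) x hx0 ⟨s, by omega⟩).2 (by simp)
  -- entries of M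
  have hMentry : ∀ a b : Fin (N + 1), M a b =
      ∑ r ∈ Finset.Icc 1 ((a : ℕ) + 2),
        (-1 : ℝ) ^ (r + 1) * t ^ ((a : ℕ) + 2 - r) / ((a : ℕ) + 2 - r).factorial *
          ((PP * Af (N + 2 - r) ((b : ℕ) + 1)
            - jetP (N + 2) k m (N + 2 - r) x * Af (N + 1) ((b : ℕ) + 1)) / PP ^ 2) := by
    intro a b
    rw [hM a b]
    have hIf : (fun y => Ifun ((a : ℕ) + 2) t y) = fun y =>
        ∑ r ∈ Finset.Icc 1 ((a : ℕ) + 2),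
          (-1 : ℝ) ^ (r + 1) * t ^ ((a : ℕ) + 2 - r) / ((a : ℕ) + 2 - r).factorial *
            (jetP (N + 2) k m (N + 2 - r) y / jetP (N + 2) k m (N + 2 - 1) y) := by
      funext y
      exact hIfun _ t y
    rw [hIf]
    have hDsum : HasFDerivAt (fun y =>
        ∑ r ∈ Finset.Icc 1 ((a : ℕ) + 2),
          (-1 : ℝ) ^ (r + 1) * t ^ ((a : ℕ) + 2 - r) / ((a : ℕ) + 2 - r).factorial *
            (jetP (N + 2) k m (N + 2 - r) y / jetP (N + 2) k m (N + 2 - 1) y))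
        (∑ r ∈ Finset.Icc 1 ((a : ℕ) + 2),
          ((-1 : ℝ) ^ (r + 1) * t ^ ((a : ℕ) + 2 - r) / ((a : ℕ) + 2 - r).factorial) •
            (jetP (N + 2) k m (N + 2 - r) x •
              ((-(PP ^ 2)⁻¹) • fderiv ℝ (jetP (N + 2) k m (N + 2 - 1)) x)
             + (PP)⁻¹ • fderiv ℝ (jetP (N + 2) k m (N + 2 - r)) x)) x := by
      apply HasFDerivAt.fun_sum
      intro r _
      apply HasFDerivAt.const_mul
      have hinv : HasFDerivAt (fun y => (jetP (N + 2) k m (N + 2 - 1) y)⁻¹)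
          ((-(PP ^ 2)⁻¹) • fderiv ℝ (jetP (N + 2) k m (N + 2 - 1)) x) x := by
        have h1 : HasDerivAt (fun z : ℝ => z⁻¹) (-(PP ^ 2)⁻¹)
            (jetP (N + 2) k m (N + 2 - 1) x) := hasDerivAt_inv hp'
        exact h1.comp_hasFDerivAt x (hdiff (N + 2 - 1)).hasFDerivAt
      have hmul := (hdiff (N + 2 - r)).hasFDerivAt.mul' hinv
      simp only [div_eq_mul_inv]
      convert hmul using 1
      · ext v; rfl
      ext v
      simp only [ContinuousLinearMap.add_apply, ContinuousLinearMap.smul_apply,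
        ContinuousLinearMap.coe_smul', Pi.smul_apply, ContinuousLinearMap.smulRight_apply,
        smul_eq_mul, MulOpposite.smul_eq_mul_unop, MulOpposite.unop_op, ← hPP]
      ring
    rw [hDsum.fderiv, ContinuousLinearMap.sum_apply]
    apply Finset.sum_congr rfl
    intro r hr
    simp only [Finset.mem_Icc] at hr
    have hAf1 : Af (N + 2 - r) ((b : ℕ) + 1) =
        fderiv ℝ (jetP (N + 2) k m (N + 2 - r)) x
          (Pi.single (⟨(b : ℕ) + 1, by have := b.isLt; omega⟩ : Fin (N + 2)) 1) := by
      simp only [hAf]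
      rw [dif_pos (by have := b.isLt; omega : (b : ℕ) + 1 < N + 2)]
    have hAf2 : Af (N + 1) ((b : ℕ) + 1) =
        fderiv ℝ (jetP (N + 2) k m (N + 2 - 1)) x
          (Pi.single (⟨(b : ℕ) + 1, by have := b.isLt; omega⟩ : Fin (N + 2)) 1) := by
      simp only [hAf]
      rw [dif_pos (by have := b.isLt; omega : (b : ℕ) + 1 < N + 2)]
      rfl
    rw [hAf1, hAf2]
    simp only [ContinuousLinearMap.smul_apply, ContinuousLinearMap.add_apply,
      ContinuousLinearMap.coe_smul', Pi.smul_apply, smul_eq_mul]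
    field_simp
    ring
  -- determinant
  have hdet : M.det = x 0 / PP ^ (N + 2) :=
    det_aux N PP (x 0) t hp' hx0 (fun s => jetP (N + 2) k m s x) Af hA0 hA1 rfl rfl M hMentry
  have hne : x 0 / PP ^ (N + 2) ≠ 0 := div_ne_zero hx0 (pow_ne_zero _ hp')
  refine ⟨hdet, hne, ?_⟩
  -- rank of the full matrix
  set S : Matrix (Fin (N + 2 + 1)) (Fin (N + 2 - 1)) ℝ := fun c b =>
    if (c : ℕ) = (b : ℕ) + 2 then 1 else 0 with hS
  have hMS : M = Mfull * S := by
    ext a b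
    rw [Matrix.mul_apply]
    rw [Finset.sum_eq_single (⟨(b : ℕ) + 2, by have := b.isLt; omega⟩ : Fin (N + 2 + 1))]
    · simp only [hS]
      rw [if_pos (by simp)]
      rw [hMfull a ⟨(b : ℕ) + 2, by have := b.isLt; omega⟩]
      rw [dif_neg (by simp)]
      rw [hM a b]
      simp only [mul_one]
      rfl
    · intro c _ hc
      simp only [hS]
      rw [if_neg (by
        intro hcontra
        apply hc
        apply Fin.ext
        simpa using hcontra)]
      ring
    · intro h
      exact absurd (Finset.mem_univ _) h
  have hrank1 : M.rank ≤ Mfull.rank := by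
    rw [hMS]
    exact Matrix.rank_mul_le_left Mfull S
  have hrank2 : M.rank = N + 1 := by
    have hU : IsUnit M := (Matrix.isUnit_iff_isUnit_det M).mpr
      (isUnit_iff_ne_zero.mpr (by rw [hdet]; exact hne))
    rw [Matrix.rank_of_isUnit M hU]
    simp
  have hrank3 : Mfull.rank ≤ N + 1 := by
    have := Matrix.rank_le_card_height Mfull
    simpa using this
  have : Mfull.rank = N + 1 := by omega
  omega
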